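/- Let A, M̃, M̂ be invertible real n×n matrices and define ξ̃ = inf_{0≠y∈ℝⁿ} |⟨A M̃⁻¹ y, y⟩|/⟨y,y⟩ and ξ̂ = inf_{0≠y∈ℝⁿ} |⟨A M̂⁻¹ y, y⟩|/⟨y,y⟩, and assume ξ̃ > 0 or ξ̂ > 0. Let r_k, r_{k−1}, r_half, r_half_prev ∈ ℝⁿ be nonzero vectors, set δ₁ = M̃⁻¹ r_k, δ₂ = M̃⁻¹(r_k − r_{k−1}) with A δ₁, A δ₂ linearly independent, and let r_half' be the residual obtained by the two-dimensional minimum residual update: r_half' = r_k − β₁ A δ₁ − β₂ A δ₂ with (β₁,β₂)ᵀ = W_A(δ₁,δ₂)⁻¹ (⟨r_k, Aδ₁⟩, ⟨r_k, Aδ₂⟩)ᵀ. Suppose r_half' = r_half. Similarly set δ₁' = M̂⁻¹ r_half, δ₂' = M̂⁻¹(r_half − r_half_prev) with A δ₁', A δ₂' linearly independent, and let r_{k+1} = r_half − γ₁ A δ₁' − γ₂ A δ₂' with (γ₁,γ₂)ᵀ = W_A(δ₁',δ₂')⁻¹ (⟨r_half, Aδ₁'⟩, ⟨r_half, Aδ₂'⟩)ᵀ.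 Define L̃ = ξ̃² ‖r_k‖² / (‖r_k‖² + ‖r_k − r_{k−1}‖²) and L̂ = ξ̂² ‖r_half‖² / (‖r_half‖² + ‖r_half − r_half_prev‖²), and L = sqrt(1 − L̃/‖A M̃⁻¹‖₂²) · sqrt(1 − L̂/‖A M̂⁻¹‖₂²). Then both quantities under the square roots are nonnegative, L < 1, and ‖r_{k+1}‖ ≤ L · ‖r_k‖. -/

import Mathlib

open Matrix
open scoped RealInnerProductSpace

set_option maxHeartbeats 1000000

/-- Spectral (operator 2-) norm of a real matrix. -/
noncomputable def spec {m n : ℕ} (M : Matrix (Fin m) (Fin n) ℝ) : ℝ :=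
  ‖LinearMap.toContinuousLinearMap (Matrix.toEuclideanLin M)‖

/-- Action of a real matrix on Euclidean space. -/
noncomputable def mulE {m n : ℕ} (M : Matrix (Fin m) (Fin n) ℝ)
    (x : EuclideanSpace ℝ (Fin n)) : EuclideanSpace ℝ (Fin m) :=
  Matrix.toEuclideanLin M x

/-- The 2×2 Gram matrix `W_A(x, y)`. -/
noncomputable def gram {n : ℕ} (A : Matrix (Fin n) (Fin n) ℝ)
    (x y : EuclideanSpace ℝ (Fin n)) : Matrix (Fin 2) (Fin 2) ℝ :=
  !![⟪mulE A x, mulE A x⟫, ⟪mulE A y, mulE A x⟫;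
     ⟪mulE A x, mulE A y⟫, ⟪mulE A y, mulE A y⟫]

lemma mulE_mul {n : ℕ} (A B : Matrix (Fin n) (Fin n) ℝ) (x : EuclideanSpace ℝ (Fin n)) :
    mulE (A * B) x = mulE A (mulE B x) := by
  simp [mulE, Matrix.toEuclideanLin_apply, Matrix.mulVec_mulVec]

lemma norm_mulE_le {n : ℕ} (B : Matrix (Fin n) (Fin n) ℝ) (x : EuclideanSpace ℝ (Fin n)) :
    ‖mulE B x‖ ≤ spec B * ‖x‖ :=
  (LinearMap.toContinuousLinearMap (Matrix.toEuclideanLin B)).le_opNorm x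

lemma abs_inner_lt {n : ℕ} {u v : EuclideanSpace ℝ (Fin n)}
    (h : LinearIndependent ℝ ![u, v]) : |⟪u, v⟫| < ‖u‖ * ‖v‖ := by
  rw [LinearIndependent.pair_iff] at h
  have hv : v ≠ 0 := fun hv0 => one_ne_zero (h 0 1 (by simp [hv0])).2
  have h1 : ⟪u, v⟫ < ‖u‖ * ‖v‖ := by
    apply inner_lt_norm_mul_iff_real.2
    intro he
    have hz : ‖v‖ • u + (-‖u‖) • v = 0 := by
      rw [neg_smul, he]; exact add_neg_cancel _
    exact norm_ne_zero_iff.2 hv (h _ _ hz).1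
  have h2 : ⟪-u, v⟫ < ‖(-u)‖ * ‖v‖ := by
    apply inner_lt_norm_mul_iff_real.2
    intro he
    rw [norm_neg, smul_neg, neg_eq_iff_eq_neg] at he
    have hz : ‖v‖ • u + ‖u‖ • v = 0 := by
      rw [he]; exact neg_add_cancel _
    exact norm_ne_zero_iff.2 hv (h _ _ hz).1
  rw [inner_neg_left, norm_neg] at h2
  rw [abs_lt]
  exact ⟨by linarith, h1⟩

lemma det_gram_pos {n : ℕ} (A : Matrix (Fin n) (Fin n) ℝ)
    (δ1 δ2 : EuclideanSpace ℝ (Fin n))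
    (hind : LinearIndependent ℝ ![mulE A δ1, mulE A δ2]) :
    0 < (gram A δ1 δ2).det := by
  have h := abs_inner_lt hind
  have h2 : ⟪mulE A δ1, mulE A δ2⟫ ^ 2 < (‖mulE A δ1‖ * ‖mulE A δ2‖) ^ 2 := by
    nlinarith [abs_nonneg ⟪mulE A δ1, mulE A δ2⟫, sq_abs ⟪mulE A δ1, mulE A δ2⟫]
  rw [_root_.gram, Matrix.det_fin_two_of]
  rw [real_inner_self_eq_norm_sq (mulE A δ1), real_inner_self_eq_norm_sq (mulE A δ2)]
  have h4 : ⟪mulE A δ2, mulE A δ1⟫ = ⟪mulE A δ1, mulE A δ2⟫ := real_inner_comm _ _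
  rw [h4]
  nlinarith [h2]

lemma ortho {n : ℕ} (A : Matrix (Fin n) (Fin n) ℝ)
    (δ1 δ2 r : EuclideanSpace ℝ (Fin n))
    (hind : LinearIndependent ℝ ![mulE A δ1, mulE A δ2])
    (β : Fin 2 → ℝ)
    (hβ : β = (gram A δ1 δ2)⁻¹.mulVec ![⟪r, mulE A δ1⟫, ⟪r, mulE A δ2⟫]) :
    ⟪r - β 0 • mulE A δ1 - β 1 • mulE A δ2, mulE A δ1⟫ = 0 ∧
    ⟪r - β 0 • mulE A δ1 - β 1 • mulE A δ2, mulE A δ2⟫ = 0 := by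
  have hdet : IsUnit (gram A δ1 δ2).det := (det_gram_pos A δ1 δ2 hind).ne'.isUnit
  have hGβ : (gram A δ1 δ2) *ᵥ β = ![⟪r, mulE A δ1⟫, ⟪r, mulE A δ2⟫] := by
    rw [hβ, Matrix.mulVec_mulVec, Matrix.mul_nonsing_inv _ hdet, Matrix.one_mulVec]
  have h0 := congrFun hGβ 0
  have h1 := congrFun hGβ 1
  simp only [_root_.gram, Matrix.mulVec, dotProduct, Fin.sum_univ_two, Matrix.cons_val_zero,
    Matrix.cons_val_one, Matrix.head_cons, Matrix.of_apply, Matrix.cons_val',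
    Matrix.empty_val', Matrix.cons_val_fin_one, Matrix.head_fin_const] at h0 h1
  constructor
  · simp only [inner_sub_left, real_inner_smul_left]
    linarith
  · simp only [inner_sub_left, real_inner_smul_left]
    linarith

lemma key {n : ℕ} (A M : Matrix (Fin n) (Fin n) ℝ)
    (ξ : ℝ)
    (hξ : ξ = ⨅ y : {y : EuclideanSpace ℝ (Fin n) // y ≠ 0},
      |⟪mulE (A * M⁻¹) y.1, y.1⟫| / ⟪y.1, y.1⟫)
    (r : EuclideanSpace ℝ (Fin n)) (hr : r ≠ 0)
    (δ1 δ2 : EuclideanSpace ℝ (Fin n))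
    (hδ1 : δ1 = mulE M⁻¹ r)
    (hind : LinearIndependent ℝ ![mulE A δ1, mulE A δ2])
    (β : Fin 2 → ℝ)
    (hβ : β = (gram A δ1 δ2)⁻¹.mulVec ![⟪r, mulE A δ1⟫, ⟪r, mulE A δ2⟫])
    (r' : EuclideanSpace ℝ (Fin n))
    (hr' : r' = r - β 0 • mulE A δ1 - β 1 • mulE A δ2) :
    0 < spec (A * M⁻¹) ∧ 0 ≤ ξ ∧
      ‖r'‖ ^ 2 ≤ (1 - ξ ^ 2 / spec (A * M⁻¹) ^ 2) * ‖r‖ ^ 2 := by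
  set u := mulE A δ1 with hu_def
  set v := mulE A δ2 with hv_def
  have hu : u = mulE (A * M⁻¹) r := by rw [hu_def, hδ1, ← mulE_mul]
  have hu0 : u ≠ 0 := by
    have := hind.ne_zero 0
    simpa using this
  have hrpos : (0:ℝ) < ‖r‖ := norm_pos_iff.2 hr
  have hupos : (0:ℝ) < ‖u‖ := norm_pos_iff.2 hu0
  set s := spec (A * M⁻¹) with hs_def
  have hus : ‖u‖ ≤ s * ‖r‖ := by rw [hu]; exact norm_mulE_le _ r
  have hspos : 0 < s := by nlinarith
  have hξ0 : 0 ≤ ξ := by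
    rw [hξ]
    apply Real.iInf_nonneg
    intro y
    exact div_nonneg (abs_nonneg _) real_inner_self_nonneg
  have hbdd : BddBelow (Set.range fun y : {y : EuclideanSpace ℝ (Fin n) // y ≠ 0} =>
      |⟪mulE (A * M⁻¹) y.1, y.1⟫| / ⟪y.1, y.1⟫) := by
    refine ⟨0, ?_⟩
    rintro x ⟨y, rfl⟩
    exact div_nonneg (abs_nonneg _) real_inner_self_nonneg
  have hξle : ξ ≤ |⟪mulE (A * M⁻¹) r, r⟫| / ⟪r, r⟫ := by
    rw [hξ]
    exact ciInf_le hbdd ⟨r, hr⟩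
  have hrr : ⟪r, r⟫ = ‖r‖ ^ 2 := real_inner_self_eq_norm_sq r
  have hξler : ξ * ‖r‖ ^ 2 ≤ |⟪r, u⟫| := by
    rw [hu, real_inner_comm]
    rw [hrr] at hξle
    calc ξ * ‖r‖ ^ 2 ≤ (|⟪mulE (A * M⁻¹) r, r⟫| / ‖r‖ ^ 2) * ‖r‖ ^ 2 := by
          apply mul_le_mul_of_nonneg_right hξle (by positivity)
      _ = |⟪mulE (A * M⁻¹) r, r⟫| := by field_simp
  obtain ⟨ho1, ho2⟩ := ortho A δ1 δ2 r hind β hβ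
  rw [← hr'] at ho1 ho2
  set p := β 0 • u + β 1 • v with hp_def
  have hrp : r = r' + p := by rw [hr', hp_def]; abel
  have hop : ⟪r', p⟫ = 0 := by
    rw [hp_def, inner_add_right, real_inner_smul_right, real_inner_smul_right, ho1, ho2]
    ring
  have hpyth : ‖r‖ ^ 2 = ‖r'‖ ^ 2 + ‖p‖ ^ 2 := by
    rw [hrp, norm_add_sq_real, hop]; ring
  have hru : ⟪r, u⟫ = ⟪p, u⟫ := by
    rw [hrp, inner_add_left, ho1]; ring
  have hcs : |⟪p, u⟫| ≤ ‖p‖ * ‖u‖ := abs_real_inner_le_norm p u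
  have hkey : ξ * ‖r‖ ≤ ‖p‖ * s := by
    have h1 : ξ * ‖r‖ ^ 2 ≤ ‖p‖ * ‖u‖ := by rw [hru] at hξler; linarith
    have h2 : ‖p‖ * ‖u‖ ≤ ‖p‖ * (s * ‖r‖) :=
      mul_le_mul_of_nonneg_left hus (norm_nonneg p)
    have h3 : (ξ * ‖r‖) * ‖r‖ ≤ (‖p‖ * s) * ‖r‖ := by nlinarith
    exact le_of_mul_le_mul_right h3 hrpos
  have hξr : 0 ≤ ξ * ‖r‖ := mul_nonneg hξ0 (norm_nonneg r)
  have hsq : ξ ^ 2 * ‖r‖ ^ 2 ≤ ‖p‖ ^ 2 * s ^ 2 := by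
    nlinarith [mul_self_le_mul_self hξr hkey]
  refine ⟨hspos, hξ0, ?_⟩
  have hs2 : 0 < s ^ 2 := by positivity
  have hp2 : ξ ^ 2 * ‖r‖ ^ 2 / s ^ 2 ≤ ‖p‖ ^ 2 := by
    rw [div_le_iff₀ hs2]; linarith
  have heq : (1 - ξ ^ 2 / s ^ 2) * ‖r‖ ^ 2 = ‖r‖ ^ 2 - ξ ^ 2 * ‖r‖ ^ 2 / s ^ 2 := by
    field_simp
  rw [heq]
  linarith

/-- Full-step residual reduction for the TSTMR iteration:
`‖r_{k+1}‖ ≤ L ‖r_k‖` with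
`L = √(1 − L̃/‖A M̃⁻¹‖₂²) · √(1 − L̂/‖A M̂⁻¹‖₂²) < 1`, both radicands being nonnegative. -/
theorem stmt6 {n : ℕ} (A Mt Mh : Matrix (Fin n) (Fin n) ℝ)
    (hA : IsUnit A) (hMt : IsUnit Mt) (hMh : IsUnit Mh)
    (ξt ξh : ℝ)
    (hξt : ξt = ⨅ y : {y : EuclideanSpace ℝ (Fin n) // y ≠ 0},
      |⟪mulE (A * Mt⁻¹) y.1, y.1⟫| / ⟪y.1, y.1⟫)
    (hξh : ξh = ⨅ y : {y : EuclideanSpace ℝ (Fin n) // y ≠ 0},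
      |⟪mulE (A * Mh⁻¹) y.1, y.1⟫| / ⟪y.1, y.1⟫)
    (hξpos : 0 < ξt ∨ 0 < ξh)
    (rk rk1 rhalf rhalfp : EuclideanSpace ℝ (Fin n))
    (hrk : rk ≠ 0) (hrk1 : rk1 ≠ 0) (hrhalf : rhalf ≠ 0) (hrhalfp : rhalfp ≠ 0)
    (δ1 δ2 : EuclideanSpace ℝ (Fin n))
    (hδ1 : δ1 = mulE Mt⁻¹ rk)
    (hδ2 : δ2 = mulE Mt⁻¹ (rk - rk1))
    (hind : LinearIndependent ℝ ![mulE A δ1, mulE A δ2])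
    (β : Fin 2 → ℝ)
    (hβ : β = (gram A δ1 δ2)⁻¹.mulVec ![⟪rk, mulE A δ1⟫, ⟪rk, mulE A δ2⟫])
    (hhalf : rhalf = rk - β 0 • mulE A δ1 - β 1 • mulE A δ2)
    (δ1' δ2' : EuclideanSpace ℝ (Fin n))
    (hδ1' : δ1' = mulE Mh⁻¹ rhalf)
    (hδ2' : δ2' = mulE Mh⁻¹ (rhalf - rhalfp))
    (hind' : LinearIndependent ℝ ![mulE A δ1', mulE A δ2'])
    (γ : Fin 2 → ℝ)
    (hγ : γ = (gram A δ1' δ2')⁻¹.mulVec ![⟪rhalf, mulE A δ1'⟫, ⟪rhalf, mulE A δ2'⟫])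
    (rnext : EuclideanSpace ℝ (Fin n))
    (hnext : rnext = rhalf - γ 0 • mulE A δ1' - γ 1 • mulE A δ2')
    (Lt Lh L : ℝ)
    (hLt : Lt = ξt ^ 2 * ‖rk‖ ^ 2 / (‖rk‖ ^ 2 + ‖rk - rk1‖ ^ 2))
    (hLh : Lh = ξh ^ 2 * ‖rhalf‖ ^ 2 / (‖rhalf‖ ^ 2 + ‖rhalf - rhalfp‖ ^ 2))
    (hL : L = Real.sqrt (1 - Lt / spec (A * Mt⁻¹) ^ 2) *
              Real.sqrt (1 - Lh / spec (A * Mh⁻¹) ^ 2)) :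
    0 ≤ 1 - Lt / spec (A * Mt⁻¹) ^ 2 ∧
    0 ≤ 1 - Lh / spec (A * Mh⁻¹) ^ 2 ∧
    L < 1 ∧ ‖rnext‖ ≤ L * ‖rk‖ := by
  obtain ⟨hs1, hξt0, h1⟩ := key A Mt ξt hξt rk hrk δ1 δ2 hδ1 hind β hβ rhalf hhalf
  obtain ⟨hs2, hξh0, h2⟩ := key A Mh ξh hξh rhalf hrhalf δ1' δ2' hδ1' hind' γ hγ rnext hnext
  set s1 := spec (A * Mt⁻¹)
  set s2 := spec (A * Mh⁻¹)
  have hrkpos : (0:ℝ) < ‖rk‖ := norm_pos_iff.2 hrk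
  have hrhpos : (0:ℝ) < ‖rhalf‖ := norm_pos_iff.2 hrhalf
  set c1 := 1 - ξt ^ 2 / s1 ^ 2 with hc1
  set c2 := 1 - ξh ^ 2 / s2 ^ 2 with hc2
  have hrk2 : (0:ℝ) < ‖rk‖ ^ 2 := by positivity
  have hrh2 : (0:ℝ) < ‖rhalf‖ ^ 2 := by positivity
  have hc1pos : 0 < c1 := by nlinarith [hrh2, hrk2, h1]
  have hc2nn : 0 ≤ c2 := by nlinarith [sq_nonneg ‖rnext‖, hrh2, h2]
  have hs1sq : (0:ℝ) < s1 ^ 2 := by positivity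
  have hs2sq : (0:ℝ) < s2 ^ 2 := by positivity
  -- bounds on Lt, Lh
  have ha1 : (0:ℝ) < ‖rk‖ ^ 2 + ‖rk - rk1‖ ^ 2 := by positivity
  have ha2 : (0:ℝ) < ‖rhalf‖ ^ 2 + ‖rhalf - rhalfp‖ ^ 2 := by positivity
  have hLt0 : 0 ≤ Lt := by rw [hLt]; positivity
  have hLh0 : 0 ≤ Lh := by rw [hLh]; positivity
  have hLtle : Lt ≤ ξt ^ 2 := by
    rw [hLt, div_le_iff₀ ha1]
    nlinarith [sq_nonneg ξt, sq_nonneg ‖rk - rk1‖]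
  have hLhle : Lh ≤ ξh ^ 2 := by
    rw [hLh, div_le_iff₀ ha2]
    nlinarith [sq_nonneg ξh, sq_nonneg ‖rhalf - rhalfp‖]
  set d1 := 1 - Lt / s1 ^ 2 with hd1
  set d2 := 1 - Lh / s2 ^ 2 with hd2
  have hc1d1 : c1 ≤ d1 := by
    rw [hc1, hd1]
    gcongr
  have hc2d2 : c2 ≤ d2 := by rw [hc2, hd2]; gcongr
  have hd1le : d1 ≤ 1 := by
    rw [hd1]
    have : 0 ≤ Lt / s1 ^ 2 := div_nonneg hLt0 hs1sq.le
    linarith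
  have hd2le : d2 ≤ 1 := by
    rw [hd2]
    have : 0 ≤ Lh / s2 ^ 2 := div_nonneg hLh0 hs2sq.le
    linarith
  have hd1pos : 0 < d1 := lt_of_lt_of_le hc1pos hc1d1
  have hd2nn : 0 ≤ d2 := le_trans hc2nn hc2d2
  refine ⟨hd1pos.le, hd2nn, ?_, ?_⟩
  · -- L < 1
    rw [hL]
    rcases hξpos with hp | hp
    · have hLtpos : 0 < Lt := by
        rw [hLt]; positivity
      have : d1 < 1 := by
        rw [hd1]
        have : 0 < Lt / s1 ^ 2 := div_pos hLtpos hs1sq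
        linarith
      have hlt : Real.sqrt d1 < 1 := by
        rw [show (1:ℝ) = Real.sqrt 1 by simp]
        exact Real.sqrt_lt_sqrt hd1pos.le (by simpa using this)
      calc Real.sqrt d1 * Real.sqrt d2 ≤ Real.sqrt d1 * 1 := by
            apply mul_le_mul_of_nonneg_left _ (Real.sqrt_nonneg _)
            exact Real.sqrt_le_one.2 hd2le
        _ = Real.sqrt d1 := by ring
        _ < 1 := hlt
    · have hLhpos : 0 < Lh := by
        rw [hLh]; positivity
      have : d2 < 1 := by
        rw [hd2]
        have : 0 < Lh / s2 ^ 2 := div_pos hLhpos hs2sq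
        linarith
      have hlt : Real.sqrt d2 < 1 := by
        rw [show (1:ℝ) = Real.sqrt 1 by simp]
        exact Real.sqrt_lt_sqrt hd2nn (by simpa using this)
      calc Real.sqrt d1 * Real.sqrt d2 ≤ 1 * Real.sqrt d2 := by
            apply mul_le_mul_of_nonneg_right _ (Real.sqrt_nonneg _)
            exact Real.sqrt_le_one.2 hd1le
        _ = Real.sqrt d2 := by ring
        _ < 1 := hlt
  · -- norm bound
    have hsq : ‖rnext‖ ^ 2 ≤ d1 * (d2 * ‖rk‖ ^ 2) := by
      have hstep : ‖rnext‖ ^ 2 ≤ c2 * (c1 * ‖rk‖ ^ 2) := by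
        calc ‖rnext‖ ^ 2 ≤ c2 * ‖rhalf‖ ^ 2 := h2
          _ ≤ c2 * (c1 * ‖rk‖ ^ 2) := by
              apply mul_le_mul_of_nonneg_left h1 hc2nn
      have e1 : c1 * ‖rk‖ ^ 2 ≤ d1 * ‖rk‖ ^ 2 :=
        mul_le_mul_of_nonneg_right hc1d1 (sq_nonneg _)
      have e2 : c2 * (c1 * ‖rk‖ ^ 2) ≤ d2 * (d1 * ‖rk‖ ^ 2) :=
        mul_le_mul hc2d2 e1 (mul_nonneg hc1pos.le (sq_nonneg _)) hd2nn
      linarith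
    have := Real.sqrt_le_sqrt hsq
    rw [Real.sqrt_sq (norm_nonneg rnext)] at this
    rw [Real.sqrt_mul hd1pos.le, Real.sqrt_mul hd2nn, Real.sqrt_sq (norm_nonneg rk)] at this
    rw [hL]
    calc ‖rnext‖ ≤ Real.sqrt d1 * (Real.sqrt d2 * ‖rk‖) := this
      _ = Real.sqrt d1 * Real.sqrt d2 * ‖rk‖ := by ring
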